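/- Define the symmetric operator A on ℓ²(ℤ, ℝ) by (Au)_n = −∑_{m∈ℤ} exp(−|n−m|) u_m + |n| u_n + π_n ∑_{m∈ℤ} π_m u_m, where π_n = exp(−|n|). Let v⁺_n = exp(−n) for n ≥ 1 and v⁺_n = 0 for n ≤ 0; let v⁻_n = v⁺_{−n}; let v⁰_n = δ_{n,0}. Then A v⁺ = 0, A v⁻ = 0, and A v⁰ = 0; in particular π = v⁺ + v⁻ + v⁰ lies in the kernel of A. -/
import Mathlib


/-- The peakon profile `π_n = exp (-|n|)`. -/
noncomputable def pk (n : ℤ) : ℝ := Real.exp (-|(n : ℝ)|)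

/-- The symmetric operator
`(Au)_n = -∑_{m∈ℤ} exp (-|n-m|) u_m + |n| u_n + π_n ∑_{m∈ℤ} π_m u_m`. -/
noncomputable def Aop (u : ℤ → ℝ) (n : ℤ) : ℝ :=
  -(∑' m : ℤ, Real.exp (-|(n : ℝ) - (m : ℝ)|) * u m) + |(n : ℝ)| * u n
    + pk n * ∑' m : ℤ, pk m * u m

/-- `v⁺_n = exp (-n)` for `n ≥ 1` and `v⁺_n = 0` for `n ≤ 0`. -/
noncomputable def vplus (n : ℤ) : ℝ := if 1 ≤ n then Real.exp (-(n : ℝ)) else 0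

/-- `v⁻_n = v⁺_{-n}`. -/
noncomputable def vminus (n : ℤ) : ℝ := vplus (-n)

/-- `v⁰_n = δ_{n,0}`. -/
def vzero (n : ℤ) : ℝ := if n = 0 then 1 else 0

section aux

lemma hg_inj : Function.Injective (fun k : ℕ => (k : ℤ) + 1) := by
  intro a b h
  simp only [] at h
  omega

lemma vplus_zero {m : ℤ} (h : ¬ 1 ≤ m) : vplus m = 0 := if_neg h

lemma mem_range_g {m : ℤ} (h : 1 ≤ m) : m ∈ Set.range (fun k : ℕ => (k : ℤ) + 1) :=
  ⟨(m - 1).toNat, by simp only []; omega⟩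

lemma supp_vplus (f : ℤ → ℝ) :
    Function.support (fun m => f m * vplus m) ⊆ Set.range (fun k : ℕ => (k : ℤ) + 1) := by
  intro m hm
  by_contra hc
  have h1 : ¬ (1 : ℤ) ≤ m := fun h => hc (mem_range_g h)
  exact hm (by simp [vplus_zero h1])

lemma zero_off_range (f : ℤ → ℝ) :
    ∀ x ∉ Set.range (fun k : ℕ => (k : ℤ) + 1), f x * vplus x = 0 := by
  intro x hx
  have h1 : ¬ (1 : ℤ) ≤ x := fun h => hx (mem_range_g h)
  simp [vplus_zero h1]

lemma tsum_E_vplus (n : ℤ) :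
    (∑' m : ℤ, Real.exp (-|(n : ℝ) - (m : ℝ)|) * vplus m)
      = ∑' k : ℕ, Real.exp (-|(n : ℝ) - ((k : ℝ) + 1)|) * Real.exp (-((k : ℝ) + 1)) := by
  rw [← Function.Injective.tsum_eq hg_inj (supp_vplus _)]
  refine tsum_congr fun k => ?_
  have h1 : (1 : ℤ) ≤ (k : ℤ) + 1 := by omega
  simp only [vplus, if_pos h1]
  push_cast
  ring_nf

lemma tsum_pk_vplus :
    (∑' m : ℤ, pk m * vplus m)
      = ∑' k : ℕ, Real.exp (-((k : ℝ) + 1)) * Real.exp (-((k : ℝ) + 1)) := by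
  rw [← Function.Injective.tsum_eq hg_inj (supp_vplus _)]
  refine tsum_congr fun k => ?_
  have h1 : (1 : ℤ) ≤ (k : ℤ) + 1 := by omega
  simp only [vplus, pk, if_pos h1]
  push_cast
  rw [abs_of_nonneg (by positivity)]

lemma summable_exp_aux : Summable (fun k : ℕ => Real.exp (-((k : ℝ) + 1))) := by
  have h := (summable_geometric_of_lt_one (Real.exp_pos (-1)).le
    (Real.exp_lt_one_iff.mpr (by norm_num))).mul_left (Real.exp (-1))
  refine h.congr fun k => ?_
  rw [← Real.exp_nat_mul, ← Real.exp_add]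
  congr 1
  ring

lemma summable_E_vplus (n : ℤ) :
    Summable (fun m : ℤ => Real.exp (-|(n : ℝ) - (m : ℝ)|) * vplus m) := by
  rw [← Function.Injective.summable_iff hg_inj (zero_off_range _)]
  refine Summable.of_nonneg_of_le (fun k => ?_) (fun k => ?_) summable_exp_aux
  · simp only [Function.comp]
    have h1 : (1 : ℤ) ≤ (k : ℤ) + 1 := by omega
    simp only [vplus, if_pos h1]
    positivity
  · simp only [Function.comp]
    have h1 : (1 : ℤ) ≤ (k : ℤ) + 1 := by omega
    simp only [vplus, if_pos h1]
    push_cast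
    refine mul_le_of_le_one_left (Real.exp_pos _).le ?_
    exact Real.exp_le_one_iff.mpr (neg_nonpos.mpr (abs_nonneg _))

lemma summable_pk_vplus : Summable (fun m : ℤ => pk m * vplus m) := by
  rw [← Function.Injective.summable_iff hg_inj (zero_off_range _)]
  refine Summable.of_nonneg_of_le (fun k => ?_) (fun k => ?_) summable_exp_aux
  · simp only [Function.comp]
    have h1 : (1 : ℤ) ≤ (k : ℤ) + 1 := by omega
    simp only [vplus, pk, if_pos h1]
    positivity
  · simp only [Function.comp]
    have h1 : (1 : ℤ) ≤ (k : ℤ) + 1 := by omega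
    simp only [vplus, pk, if_pos h1]
    push_cast
    refine mul_le_of_le_one_left (Real.exp_pos _).le ?_
    exact Real.exp_le_one_iff.mpr (neg_nonpos.mpr (abs_nonneg _))

end aux

section key

lemma exp2_lt_one : Real.exp (-2 : ℝ) < 1 := Real.exp_lt_one_iff.mpr (by norm_num)

lemma sum_pk_vplus_val :
    (∑' m : ℤ, pk m * vplus m) = Real.exp (-2) * (1 - Real.exp (-2))⁻¹ := by
  rw [tsum_pk_vplus]
  have h : ∀ k : ℕ, Real.exp (-((k : ℝ) + 1)) * Real.exp (-((k : ℝ) + 1))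
      = Real.exp (-2) * Real.exp (-2 : ℝ) ^ k := by
    intro k
    rw [← Real.exp_nat_mul, ← Real.exp_add, ← Real.exp_add]
    congr 1
    ring
  rw [tsum_congr h, tsum_mul_left,
    tsum_geometric_of_lt_one (Real.exp_pos _).le exp2_lt_one]

lemma key_vplus (n : ℤ) :
    (∑' m : ℤ, Real.exp (-|(n : ℝ) - (m : ℝ)|) * vplus m)
      = |(n : ℝ)| * vplus n + pk n * (Real.exp (-2) * (1 - Real.exp (-2))⁻¹) := by
  rw [tsum_E_vplus]
  rcases le_or_gt n 0 with hn | hn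
  · have hn' : (n : ℝ) ≤ 0 := by exact_mod_cast hn
    have h : ∀ k : ℕ, Real.exp (-|(n : ℝ) - ((k : ℝ) + 1)|) * Real.exp (-((k : ℝ) + 1))
        = Real.exp (n : ℝ) * (Real.exp (-2) * Real.exp (-2 : ℝ) ^ k) := by
      intro k
      have hk : (0 : ℝ) ≤ (k : ℝ) := Nat.cast_nonneg k
      rw [abs_of_nonpos (by linarith), ← Real.exp_nat_mul, ← Real.exp_add,
        ← Real.exp_add, ← Real.exp_add]
      congr 1
      ring
    rw [tsum_congr h, tsum_mul_left, tsum_mul_left,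
      tsum_geometric_of_lt_one (Real.exp_pos _).le exp2_lt_one,
      vplus_zero (by omega), pk, abs_of_nonpos hn']
    ring
  · -- 1 ≤ n
    set N := n.toNat with hNdef
    have hN : (N : ℤ) = n := Int.toNat_of_nonneg (by omega)
    have hNR : ((N : ℕ) : ℝ) = (n : ℝ) := by exact_mod_cast congrArg (Int.cast : ℤ → ℝ) hN
    have hn' : (1 : ℝ) ≤ (n : ℝ) := by exact_mod_cast hn
    have hsum : Summable (fun k : ℕ =>
        Real.exp (-|(n : ℝ) - ((k : ℝ) + 1)|) * Real.exp (-((k : ℝ) + 1))) := by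
      refine Summable.of_nonneg_of_le (fun k => by positivity) (fun k => ?_) summable_exp_aux
      exact mul_le_of_le_one_left (Real.exp_pos _).le
        (Real.exp_le_one_iff.mpr (neg_nonpos.mpr (abs_nonneg _)))
    rw [← Summable.sum_add_tsum_nat_add N hsum]
    have h1 : (∑ i ∈ Finset.range N, Real.exp (-|(n : ℝ) - ((i : ℝ) + 1)|)
        * Real.exp (-((i : ℝ) + 1))) = (N : ℝ) * Real.exp (-(n : ℝ)) := by
      have hterm : ∀ i ∈ Finset.range N, Real.exp (-|(n : ℝ) - ((i : ℝ) + 1)|)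
          * Real.exp (-((i : ℝ) + 1)) = Real.exp (-(n : ℝ)) := by
        intro i hi
        have hi' : (i : ℤ) + 1 ≤ n := by
          have := Finset.mem_range.mp hi
          omega
        have hiR : (i : ℝ) + 1 ≤ (n : ℝ) := by exact_mod_cast hi'
        rw [abs_of_nonneg (by linarith), ← Real.exp_add]
        congr 1
        ring
      rw [Finset.sum_congr rfl hterm, Finset.sum_const, Finset.card_range, nsmul_eq_mul]
    have h2 : (∑' i : ℕ, Real.exp (-|(n : ℝ) - (((i + N : ℕ) : ℝ) + 1)|)
        * Real.exp (-(((i + N : ℕ) : ℝ) + 1)))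
        = Real.exp (-(n : ℝ)) * (Real.exp (-2) * (1 - Real.exp (-2))⁻¹) := by
      have h : ∀ i : ℕ, Real.exp (-|(n : ℝ) - (((i + N : ℕ) : ℝ) + 1)|)
          * Real.exp (-(((i + N : ℕ) : ℝ) + 1))
          = Real.exp (-(n : ℝ)) * (Real.exp (-2) * Real.exp (-2 : ℝ) ^ i) := by
        intro i
        have hc : (((i + N : ℕ) : ℝ)) = (i : ℝ) + (n : ℝ) := by push_cast [hNR]; ring
        have hk : (0 : ℝ) ≤ (i : ℝ) := Nat.cast_nonneg i
        rw [hc, abs_of_nonpos (by linarith), ← Real.exp_nat_mul, ← Real.exp_add,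
          ← Real.exp_add, ← Real.exp_add]
        congr 1
        ring
      rw [tsum_congr h, tsum_mul_left, tsum_mul_left,
        tsum_geometric_of_lt_one (Real.exp_pos _).le exp2_lt_one]
    rw [h1, h2, vplus, if_pos (show (1:ℤ) ≤ n by omega), pk, abs_of_nonneg (by linarith), hNR]

end key

section rest

lemma pk_neg (n : ℤ) : pk (-n) = pk n := by
  unfold pk
  push_cast
  rw [abs_neg]

lemma Aop_vminus_eq (n : ℤ) : Aop vminus n = Aop vplus (-n) := by
  unfold Aop
  have e1 : (∑' m : ℤ, Real.exp (-|(n : ℝ) - (m : ℝ)|) * vminus m)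
      = ∑' m : ℤ, Real.exp (-|((-n : ℤ) : ℝ) - (m : ℝ)|) * vplus m := by
    rw [← (Equiv.neg ℤ).tsum_eq (fun m => Real.exp (-|(n : ℝ) - (m : ℝ)|) * vminus m)]
    refine tsum_congr fun m => ?_
    simp only [Equiv.neg_apply, vminus, neg_neg]
    congr 2
    push_cast
    rw [show (n : ℝ) - (-m) = -(-(n : ℝ) - m) by ring, abs_neg]
  have e2 : (∑' m : ℤ, pk m * vminus m) = ∑' m : ℤ, pk m * vplus m := by
    rw [← (Equiv.neg ℤ).tsum_eq (fun m => pk m * vminus m)]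
    refine tsum_congr fun m => ?_
    simp only [Equiv.neg_apply, vminus, neg_neg, pk_neg]
  rw [e1, e2, pk_neg]
  have : |((-n : ℤ) : ℝ)| = |(n : ℝ)| := by push_cast; rw [abs_neg]
  rw [this]
  rfl

lemma summable_E_vminus (n : ℤ) :
    Summable (fun m : ℤ => Real.exp (-|(n : ℝ) - (m : ℝ)|) * vminus m) := by
  rw [← (Equiv.neg ℤ).summable_iff]
  refine (summable_E_vplus (-n)).congr fun m => ?_
  simp only [Function.comp, Equiv.neg_apply, vminus, neg_neg]
  congr 2
  push_cast
  rw [show -(n : ℝ) - m = -((n : ℝ) - (-m)) by ring, abs_neg]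

lemma summable_pk_vminus : Summable (fun m : ℤ => pk m * vminus m) := by
  rw [← (Equiv.neg ℤ).summable_iff]
  refine summable_pk_vplus.congr fun m => ?_
  simp only [Function.comp, Equiv.neg_apply, vminus, neg_neg, pk_neg]

lemma summable_E_vzero (n : ℤ) :
    Summable (fun m : ℤ => Real.exp (-|(n : ℝ) - (m : ℝ)|) * vzero m) := by
  refine summable_of_ne_finset_zero (s := {(0 : ℤ)}) fun b hb => ?_
  simp only [Finset.mem_singleton] at hb
  simp [vzero, hb]

lemma summable_pk_vzero : Summable (fun m : ℤ => pk m * vzero m) := by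
  refine summable_of_ne_finset_zero (s := {(0 : ℤ)}) fun b hb => ?_
  simp only [Finset.mem_singleton] at hb
  simp [vzero, hb]

lemma Aop_vplus_zero : ∀ n : ℤ, Aop vplus n = 0 := by
  intro n
  unfold Aop
  rw [key_vplus n, sum_pk_vplus_val]
  ring

lemma Aop_vzero_zero : ∀ n : ℤ, Aop vzero n = 0 := by
  intro n
  unfold Aop
  rw [tsum_eq_single (0 : ℤ) (fun b hb => by simp [vzero, hb]),
    tsum_eq_single (0 : ℤ) (fun b hb => by simp [vzero, hb])]
  by_cases h : n = 0 <;> simp [h, vzero, pk]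

lemma sum_eq_pk : ∀ n : ℤ, vplus n + vminus n + vzero n = pk n := by
  intro n
  rcases lt_trichotomy n 0 with h | h | h
  · rw [vminus, vplus, if_neg (by omega), vplus, if_pos (by omega), vzero,
      if_neg (by omega), pk, abs_of_neg (by exact_mod_cast h)]
    push_cast
    ring_nf
  · subst h
    simp [vplus, vminus, vzero, pk]
  · rw [vminus, vplus, if_pos (by omega), vplus, if_neg (by omega), vzero,
      if_neg (by omega), pk, abs_of_pos (by exact_mod_cast h)]
    push_cast
    ring_nf

end rest


/-- The vectors `v⁺`, `v⁻`, `v⁰` lie in the kernel of `A`; in particular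
`π = v⁺ + v⁻ + v⁰` lies in the kernel of `A`. -/
theorem kernel_of_A :
    (∀ n : ℤ, Aop vplus n = 0) ∧
    (∀ n : ℤ, Aop vminus n = 0) ∧
    (∀ n : ℤ, Aop vzero n = 0) ∧
    (∀ n : ℤ, vplus n + vminus n + vzero n = pk n) ∧
    (∀ n : ℤ, Aop (fun m => vplus m + vminus m + vzero m) n = 0) := by
  have hminus : ∀ n : ℤ, Aop vminus n = 0 := fun n => by
    rw [Aop_vminus_eq]; exact Aop_vplus_zero _
  refine ⟨Aop_vplus_zero, hminus, Aop_vzero_zero, sum_eq_pk, fun n => ?_⟩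
  have h1 : (∑' m : ℤ, Real.exp (-|(n : ℝ) - (m : ℝ)|) * (vplus m + vminus m + vzero m))
      = (∑' m : ℤ, Real.exp (-|(n : ℝ) - (m : ℝ)|) * vplus m)
        + (∑' m : ℤ, Real.exp (-|(n : ℝ) - (m : ℝ)|) * vminus m)
        + (∑' m : ℤ, Real.exp (-|(n : ℝ) - (m : ℝ)|) * vzero m) := by
    have hpt : ∀ m : ℤ, Real.exp (-|(n : ℝ) - (m : ℝ)|) * (vplus m + vminus m + vzero m)
        = (Real.exp (-|(n : ℝ) - (m : ℝ)|) * vplus m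
          + Real.exp (-|(n : ℝ) - (m : ℝ)|) * vminus m)
          + Real.exp (-|(n : ℝ) - (m : ℝ)|) * vzero m := fun m => by ring
    rw [tsum_congr hpt,
      Summable.tsum_add ((summable_E_vplus n).add (summable_E_vminus n)) (summable_E_vzero n),
      Summable.tsum_add (summable_E_vplus n) (summable_E_vminus n)]
  have h2 : (∑' m : ℤ, pk m * (vplus m + vminus m + vzero m))
      = (∑' m : ℤ, pk m * vplus m) + (∑' m : ℤ, pk m * vminus m)
        + (∑' m : ℤ, pk m * vzero m) := by
    have hpt : ∀ m : ℤ, pk m * (vplus m + vminus m + vzero m)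
        = (pk m * vplus m + pk m * vminus m) + pk m * vzero m := fun m => by ring
    rw [tsum_congr hpt,
      Summable.tsum_add (summable_pk_vplus.add summable_pk_vminus) summable_pk_vzero,
      Summable.tsum_add summable_pk_vplus summable_pk_vminus]
  have p1 := Aop_vplus_zero n
  have p2 := hminus n
  have p3 := Aop_vzero_zero n
  unfold Aop at p1 p2 p3 ⊢
  simp only [] at *
  rw [h1, h2]
  linear_combination p1 + p2 + p3
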